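/- arXiv:1910.04595 — 4 statements merged into one kernel-verified Lean document; each statement's English description precedes it below -/
import Mathlib

section
/- If s is a Salem number, then s^m is also a Salem number for every positive integer m. -/
/-- A Salem number: a real algebraic integer `s > 1` which is a unit (constant
term of its minimal polynomial is `±1`), such that `1/s` is a Galois conjugate of `s`,
and every Galois conjugate of `s` other than `s` and `1/s` has absolute value `1`. -/
def IsSalem (s : ℝ) : Prop :=
  1 < s ∧ IsIntegral ℤ s ∧
    ((minpoly ℚ s).coeff 0 = 1 ∨ (minpoly ℚ s).coeff 0 = -1) ∧
    Polynomial.aeval (s⁻¹) (minpoly ℚ s) = 0 ∧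
    ∀ z : ℂ, Polynomial.aeval z (minpoly ℚ s) = 0 →
      z = (s : ℂ) ∨ z = ((s⁻¹ : ℝ) : ℂ) ∨ ‖z‖ = 1

open Polynomial IntermediateField

/-- `aeval` commutes with the coercion `ℝ → ℂ` for rational polynomials. -/
lemma aeval_real_complex (r : ℝ) (p : Polynomial ℚ) :
    Polynomial.aeval ((r : ℂ)) p = ((Polynomial.aeval r p : ℝ) : ℂ) := by
  simpa using Polynomial.aeval_algHom_apply (IsScalarTower.toAlgHom ℚ ℝ ℂ) r p

/-- Any complex root of the minimal polynomial of an element of `ℚ⟮s⟯` is hit by an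
algebra homomorphism to `ℂ`. -/
lemma salem_aux_hom {s : ℝ} (hsi : IsIntegral ℚ s) {x : ℝ}
    (hx : x ∈ IntermediateField.adjoin ℚ ({s} : Set ℝ)) {y : ℂ}
    (hy : Polynomial.aeval y (minpoly ℚ x) = 0) :
    ∃ φ : IntermediateField.adjoin ℚ ({s} : Set ℝ) →ₐ[ℚ] ℂ, φ ⟨x, hx⟩ = y := by
  refine IntermediateField.exists_algHom_adjoin_of_splits_of_aeval ?_ hx hy
  intro t ht
  rcases Set.mem_singleton_iff.mp ht with rfl
  exact ⟨hsi, IsAlgClosed.splits _⟩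

lemma salem_aux_root {s : ℝ} (φ : IntermediateField.adjoin ℚ ({s} : Set ℝ) →ₐ[ℚ] ℂ)
    (t : IntermediateField.adjoin ℚ ({s} : Set ℝ)) :
    Polynomial.aeval (φ t) (minpoly ℚ (t : ℝ)) = 0 := by
  have h1 : minpoly ℚ ((t : ℝ)) = minpoly ℚ t :=
    minpoly.algebraMap_eq (algebraMap (IntermediateField.adjoin ℚ ({s} : Set ℝ)) ℝ).injective t
  rw [h1, Polynomial.aeval_algHom_apply, minpoly.aeval, map_zero]

/-- If `w` is a root of the minimal polynomial of `s`, then `w ^ m` is a root of the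
minimal polynomial of `s ^ m`. -/
lemma salem_pow_root {s : ℝ} (hsi : IsIntegral ℚ s) (m : ℕ) {w : ℂ}
    (hw : Polynomial.aeval w (minpoly ℚ s) = 0) :
    Polynomial.aeval (w ^ m) (minpoly ℚ (s ^ m)) = 0 := by
  have hmem : s ∈ IntermediateField.adjoin ℚ ({s} : Set ℝ) :=
    IntermediateField.mem_adjoin_simple_self ℚ s
  obtain ⟨φ, hφ⟩ := salem_aux_hom hsi hmem hw
  have h2 := salem_aux_root φ ((⟨s, hmem⟩ : IntermediateField.adjoin ℚ ({s} : Set ℝ)) ^ m)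
  have h3 : (((⟨s, hmem⟩ : IntermediateField.adjoin ℚ ({s} : Set ℝ)) ^ m : _) : ℝ) = s ^ m := by
    push_cast; rfl
  rw [h3] at h2
  rwa [map_pow, hφ] at h2

/-- Conversely, every root of the minimal polynomial of `s ^ m` is an `m`-th power of a
root of the minimal polynomial of `s`. -/
lemma salem_pow_root_rev {s : ℝ} (hsi : IsIntegral ℚ s) (m : ℕ) {z : ℂ}
    (hz : Polynomial.aeval z (minpoly ℚ (s ^ m)) = 0) :
    ∃ w : ℂ, Polynomial.aeval w (minpoly ℚ s) = 0 ∧ w ^ m = z := by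
  have hmem : s ∈ IntermediateField.adjoin ℚ ({s} : Set ℝ) :=
    IntermediateField.mem_adjoin_simple_self ℚ s
  have hmem2 : s ^ m ∈ IntermediateField.adjoin ℚ ({s} : Set ℝ) := pow_mem hmem m
  obtain ⟨φ, hφ⟩ := salem_aux_hom hsi hmem2 hz
  refine ⟨φ ⟨s, hmem⟩, ?_, ?_⟩
  · simpa using salem_aux_root φ ⟨s, hmem⟩
  · rw [← map_pow]
    rw [show (⟨s, hmem⟩ : IntermediateField.adjoin ℚ ({s} : Set ℝ)) ^ m = ⟨s ^ m, hmem2⟩ from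
      Subtype.ext (by push_cast; rfl)]
    exact hφ

theorem salem_pow {s : ℝ} (hs : IsSalem s) : ∀ m : ℕ, 0 < m → IsSalem (s ^ m) := by
  intro m hm
  obtain ⟨hs1, hs2, hs3, hs4, hs5⟩ := hs
  have hsi : IsIntegral ℚ s := hs2.tower_top
  have hQi : IsIntegral ℚ (s ^ m) := hsi.pow m
  have hspos : (0 : ℝ) < s := lt_trans one_pos hs1
  have hsm1 : 1 < s ^ m := one_lt_pow₀ hs1 hm.ne'
  have hsmpos : (0 : ℝ) < s ^ m := lt_trans one_pos hsm1
  -- (s⁻¹ : ℂ) is a root of minpoly ℚ s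
  have hinv_c : Polynomial.aeval ((s⁻¹ : ℝ) : ℂ) (minpoly ℚ s) = 0 := by
    rw [aeval_real_complex, hs4]; simp
  have hpowinv : (((s⁻¹ : ℝ) : ℂ)) ^ m = (((s ^ m)⁻¹ : ℝ) : ℂ) := by push_cast; ring
  have hA := salem_pow_root hsi m hinv_c
  rw [hpowinv, aeval_real_complex] at hA
  -- (d): (s^m)⁻¹ is a root
  have hd : Polynomial.aeval ((s ^ m)⁻¹) (minpoly ℚ (s ^ m)) = 0 := by
    exact_mod_cast hA
  -- (e): description of all complex roots
  have he : ∀ z : ℂ, Polynomial.aeval z (minpoly ℚ (s ^ m)) = 0 →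
      z = ((s ^ m : ℝ) : ℂ) ∨ z = (((s ^ m)⁻¹ : ℝ) : ℂ) ∨ ‖z‖ = 1 := by
    intro z hz
    obtain ⟨w, hw, rfl⟩ := salem_pow_root_rev hsi m hz
    rcases hs5 w hw with h | h | h
    · left; rw [h]; push_cast; ring
    · right; left; rw [h, hpowinv]
    · right; right; rw [norm_pow, h, one_pow]
  refine ⟨hsm1, hs2.pow m, ?_, hd, he⟩
  -- (c): constant coefficient is ±1
  set Q := minpoly ℚ (s ^ m) with hQdef
  have hQ0 : Q ≠ 0 := minpoly.ne_zero hQi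
  set Qc := Q.map (algebraMap ℚ ℂ) with hQcdef
  have hQc0 : Qc ≠ 0 := (Polynomial.map_ne_zero_iff (algebraMap ℚ ℂ).injective).mpr hQ0
  have hroot_iff : ∀ z : ℂ, z ∈ Qc.roots ↔ Polynomial.aeval z Q = 0 := by
    intro z
    rw [Polynomial.mem_roots hQc0, Polynomial.IsRoot, hQcdef, Polynomial.eval_map,
      ← Polynomial.aeval_def]
  have hnodup : Qc.roots.Nodup :=
    Polynomial.nodup_roots ((minpoly.irreducible hQi).separable.map)
  set a : ℂ := ((s ^ m : ℝ) : ℂ) with hadef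
  set b : ℂ := (((s ^ m)⁻¹ : ℝ) : ℂ) with hbdef
  have haQ : Polynomial.aeval a Q = 0 := by
    rw [hadef, aeval_real_complex, hQdef, minpoly.aeval]; simp
  have hbQ : Polynomial.aeval b Q = 0 := by
    rw [hbdef, aeval_real_complex, hd]; simp
  have hab : a ≠ b := by
    rw [hadef, hbdef]
    intro h
    have h2 : s ^ m = (s ^ m)⁻¹ := by exact_mod_cast h
    have h3 : s ^ m * s ^ m = 1 := by
      nth_rewrite 2 [h2]
      exact mul_inv_cancel₀ (ne_of_gt hsmpos)
    nlinarith [hsm1, h3]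
  have ha : a ∈ Qc.roots := (hroot_iff a).mpr haQ
  have hb : b ∈ Qc.roots.erase a :=
    (Multiset.mem_erase_of_ne (Ne.symm hab)).mpr ((hroot_iff b).mpr hbQ)
  have hsplit : Qc.roots = a ::ₘ b ::ₘ ((Qc.roots.erase a).erase b) := by
    rw [Multiset.cons_erase hb, Multiset.cons_erase ha]
  have habsa : ‖a‖ = s ^ m := by
    rw [hadef, Complex.norm_real, Real.norm_eq_abs, abs_of_pos hsmpos]
  have habsb : ‖b‖ = (s ^ m)⁻¹ := by
    rw [hbdef, Complex.norm_real, Real.norm_eq_abs, abs_of_pos (inv_pos.mpr hsmpos)]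
  have hrest : ∀ x ∈ (Qc.roots.erase a).erase b, ‖x‖ = 1 := by
    intro x hx
    have hxa : x ≠ a := by
      intro h; subst h
      exact hnodup.notMem_erase (Multiset.mem_of_mem_erase hx)
    have hxb : x ≠ b := by
      intro h; subst h
      exact (hnodup.erase a).notMem_erase hx
    have hxr : Polynomial.aeval x Q = 0 :=
      (hroot_iff x).mp (Multiset.mem_of_mem_erase (Multiset.mem_of_mem_erase hx))
    rcases he x hxr with h | h | h
    · exact absurd h hxa
    · exact absurd h hxb
    · exact h
  have hprod : (Qc.roots.map (‖·‖)).prod = 1 := by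
    rw [hsplit]
    simp only [Multiset.map_cons, Multiset.prod_cons, habsa, habsb]
    have : ((((Qc.roots.erase a).erase b).map (‖·‖))).prod = 1 := by
      refine Multiset.prod_eq_one ?_
      intro y hy
      obtain ⟨x, hx, rfl⟩ := Multiset.mem_map.mp hy
      exact hrest x hx
    rw [this, mul_one, mul_inv_cancel₀ (ne_of_gt hsmpos)]
  have hmonic : Qc.Monic := (minpoly.monic hQi).map _
  have hcoeff := (IsAlgClosed.splits Qc).coeff_zero_eq_prod_roots_of_monic hmonic
  -- |coeff 0| = 1
  have hmap : ‖Qc.roots.prod‖ = (Qc.roots.map (‖·‖)).prod := by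
    exact (Multiset.prod_hom Qc.roots (normHom : ℂ →*₀ ℝ)).symm
  have habs : ‖Qc.coeff 0‖ = 1 := by
    rw [hcoeff, norm_mul, norm_pow]
    have hneg : ‖(-1 : ℂ)‖ = 1 := by simp
    rw [hneg, one_pow, one_mul, hmap]
    exact hprod
  have hcoeffQ : Qc.coeff 0 = ((Q.coeff 0 : ℂ)) := by
    rw [hQcdef, Polynomial.coeff_map]
    simp
  rw [hcoeffQ] at habs
  have habsq : |Q.coeff 0| = 1 := by
    have h1 : ((Q.coeff 0 : ℂ)) = (((Q.coeff 0 : ℝ)) : ℂ) := by push_cast; rfl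
    rw [h1, Complex.norm_real, Real.norm_eq_abs] at habs
    exact_mod_cast habs
  rcases abs_eq (by norm_num : (0:ℚ) ≤ 1) |>.mp habsq with h | h
  · exact Or.inl h
  · exact Or.inr h
end

section
/- Let s be a Salem number and let e^{iθ_1}, ..., e^{iθ_k} be its Galois conjugates on the unit circle with positive imaginary part. Then e^{iθ_1}, ..., e^{iθ_k} are multiplicatively independent: if the product of (e^{iθ_j})^{m_j} over j equals 1 for integers m_j, then all m_j = 0. -/
/-- The Galois conjugates of a Salem number lying on the unit circle with positive
imaginary part are multiplicatively independent. -/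
theorem salem_conjugates_multiplicatively_independent {s : ℝ} (hs : IsSalem s)
    {k : ℕ} (z : Fin k → ℂ) (hinj : Function.Injective z)
    (hroot : ∀ j, Polynomial.aeval (z j) (minpoly ℚ s) = 0)
    (him : ∀ j, 0 < (z j).im)
    (hall : ∀ w : ℂ, Polynomial.aeval w (minpoly ℚ s) = 0 → 0 < w.im → ∃ j, z j = w)
    (m : Fin k → ℤ) (hprod : ∏ j, (z j) ^ (m j) = 1) :
    ∀ j, m j = 0 := by
  classical
  obtain ⟨hs1, hs2, -, -, habs⟩ := hs
  intro j0
  set p := minpoly ℚ s with hpdef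
  have hsQ : IsIntegral ℚ s := hs2.tower_top
  have hirr : Irreducible p := minpoly.irreducible hsQ
  have hmonic : p.Monic := minpoly.monic hsQ
  have hpne : p ≠ 0 := hmonic.ne_zero
  have hsplits : (p.map (algebraMap ℚ ℂ)).Splits := IsAlgClosed.splits _
  set L := p.SplittingField with hLdef
  haveI : Polynomial.IsSplittingField ℚ L p := Polynomial.IsSplittingField.splittingField p
  haveI : Normal ℚ L := Polynomial.SplittingField.instNormal p
  let ι : L →ₐ[ℚ] ℂ := Polynomial.IsSplittingField.lift L p hsplits
  -- every complex root of `p` comes from a root in the splitting field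
  have hι_surj : ∀ x : ℂ, Polynomial.aeval x p = 0 →
      ∃ w : L, Polynomial.aeval w p = 0 ∧ ι w = x := by
    intro x hx
    have key := (Polynomial.IsSplittingField.splits L p).roots_map_of_injective
      (ι : L →+* ℂ).injective
    rw [Polynomial.map_map, ι.comp_algebraMap] at key
    have hx' : x ∈ (p.map (algebraMap ℚ ℂ)).roots := by
      rw [Polynomial.mem_roots_map hpne, ← Polynomial.aeval_def]
      exact hx
    rw [key, Multiset.mem_map] at hx'
    obtain ⟨w, hw1, hw2⟩ := hx'
    rw [Polynomial.mem_roots_map hpne, ← Polynomial.aeval_def] at hw1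
    exact ⟨w, hw1, hw2⟩
  choose w hw1 hw2 using fun j => hι_surj (z j) (hroot j)
  -- `s` itself comes from a root in the splitting field
  have hsC : Polynomial.aeval ((s : ℝ) : ℂ) p = 0 := by
    have h0 : Polynomial.aeval s p = 0 := minpoly.aeval ℚ s
    have := Polynomial.aeval_algHom_apply (Complex.ofRealAm.restrictScalars ℚ) s p
    rw [h0, map_zero] at this
    exact this
  obtain ⟨ws, hws1, hws2⟩ := hι_surj _ hsC
  -- a Galois automorphism sending `w j0` to `ws`
  have hmin1 : p = minpoly ℚ (w j0) :=
    minpoly.eq_of_irreducible_of_monic hirr (hw1 j0) hmonic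
  have hmin2 : p = minpoly ℚ ws :=
    minpoly.eq_of_irreducible_of_monic hirr hws1 hmonic
  obtain ⟨g, hg⟩ := (Normal.minpoly_eq_iff_mem_orbit (F := ℚ) (E := L)).mp
    (hmin2.symm.trans hmin1)
  have hg' : g (w j0) = ws := hg
  set φ : L →ₐ[ℚ] ℂ := ι.comp g.toAlgHom with hφdef
  have hφinj : Function.Injective φ := φ.toRingHom.injective
  set y : Fin k → ℂ := fun j => φ (w j) with hydef
  have hy0 : y j0 = (s : ℂ) := by
    simp only [hydef, hφdef, AlgHom.comp_apply, AlgEquiv.toAlgHom_eq_coe,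
      AlgHom.coe_coe, AlgEquiv.coe_algHom, hg', hws2]
  have hyroot : ∀ j, Polynomial.aeval (y j) p = 0 := by
    intro j
    have := Polynomial.aeval_algHom_apply φ (w j) p
    rw [hw1 j, map_zero] at this
    exact this
  -- pull the multiplicative relation back to the splitting field and push with φ
  have hιinj : Function.Injective ι := ι.toRingHom.injective
  have hwprod : (∏ j, (w j) ^ (m j)) = 1 := by
    apply hιinj
    rw [map_one, map_prod]
    simp_rw [map_zpow₀ ι]
    simpa [hw2] using hprod
  have hyprod : (∏ j, (y j) ^ (m j)) = 1 := by
    have := congrArg φ hwprod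
    rw [map_one, map_prod] at this
    simp_rw [map_zpow₀ φ] at this
    exact this
  -- the images other than `y j0` lie on the unit circle
  have hyabs : ∀ j, j ≠ j0 → ‖y j‖ = 1 := by
    intro j hj
    rcases habs (y j) (hyroot j) with h | h | h
    · exfalso
      apply hj
      apply hinj
      have : w j = w j0 := hφinj (show y j = y j0 by rw [h, hy0])
      rw [← hw2 j, ← hw2 j0, this]
    · exfalso
      have hsne : ((s : ℝ) : ℂ) ≠ 0 := by
        simp only [ne_eq, Complex.ofReal_eq_zero]
        positivity
      have h' : y j = ((s : ℝ) : ℂ)⁻¹ := by rw [h, Complex.ofReal_inv]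
      have hww : (w j)⁻¹ = w j0 := by
        apply hφinj
        rw [map_inv₀]
        show (y j)⁻¹ = y j0
        rw [h', inv_inv, hy0]
      have hzz : (z j)⁻¹ = z j0 := by
        rw [← hw2 j, ← hw2 j0, ← hww, map_inv₀]
      have : (z j0).im < 0 := by
        rw [← hzz, Complex.inv_im]
        have h1 : 0 < (z j).im := him j
        have h2 : 0 < Complex.normSq (z j) := by
          apply Complex.normSq_pos.mpr
          intro h0
          rw [h0] at h1
          simp at h1
        exact div_neg_of_neg_of_pos (by linarith) h2
      linarith [him j0]
    · exact h
  -- take absolute values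
  have habsprod : (∏ j, ‖y j‖ ^ (m j)) = 1 := by
    have := congrArg (‖·‖) hyprod
    rw [norm_one, norm_prod] at this
    simp_rw [norm_zpow] at this
    exact this
  have hfinal : s ^ (m j0) = 1 := by
    rw [Finset.prod_eq_single j0 (fun j _ hj => by rw [hyabs j hj, one_zpow])
      (fun h => absurd (Finset.mem_univ j0) h)] at habsprod
    rw [hy0] at habsprod
    rw [Complex.norm_real, Real.norm_of_nonneg (by linarith)] at habsprod
    exact habsprod
  exact (zpow_eq_one_iff_right₀ (by linarith : (0:ℝ) ≤ s) (by linarith : s ≠ 1)).mp hfinal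
end

section
/- For any Salem number s and any open arc of the complex unit circle containing 1, there exist infinitely many positive integers m such that every complex (non-real) Galois conjugate of s^m lies in that arc. -/
open Polynomial in
private lemma salem_key {s : ℝ} (hs : IsSalem s) {m : ℕ} {z : ℂ}
    (hz : Polynomial.aeval z (minpoly ℚ (s ^ m)) = 0) (him : z.im ≠ 0) :
    ∃ w : ℂ, Polynomial.aeval w (minpoly ℚ s) = 0 ∧ ‖w‖ = 1 ∧ w ^ m = z := by
  obtain ⟨hs1, hsint, -, -, hroots⟩ := hs
  have hsQ : IsIntegral ℚ s := hsint.tower_top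
  have haQ : IsIntegral ℚ ((s : ℂ)) := by
    have := hsQ.map (IsScalarTower.toAlgHom ℚ ℝ ℂ)
    simpa using this
  set K := IntermediateField.adjoin ℚ {(s : ℂ)} with hKdef
  have hginK : ((s : ℂ)) ∈ K := IntermediateField.mem_adjoin_simple_self ℚ _
  haveI : FiniteDimensional ℚ K := IntermediateField.adjoin.finiteDimensional haQ
  have hK' : ∀ t : K, IsIntegral ℚ t ∧ ((minpoly ℚ t).map (algebraMap ℚ ℂ)).Splits :=
    fun t => ⟨IsIntegral.of_finite ℚ t, IsAlgClosed.splits _⟩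
  set g : K := ⟨(s : ℂ), hginK⟩ with hgdef
  have hmg : minpoly ℚ g = minpoly ℚ s := by
    have h1 : minpoly ℚ (algebraMap K ℂ g) = minpoly ℚ g :=
      minpoly.algebraMap_eq (algebraMap K ℂ).injective g
    have h2 : minpoly ℚ ((s : ℂ)) = minpoly ℚ s :=
      minpoly.algebraMap_eq (algebraMap ℝ ℂ).injective s
    rw [← h1]; exact h2
  have hmx : minpoly ℚ (g ^ m) = minpoly ℚ (s ^ m) := by
    have h1 : minpoly ℚ (algebraMap K ℂ (g ^ m)) = minpoly ℚ (g ^ m) :=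
      minpoly.algebraMap_eq (algebraMap K ℂ).injective _
    have h2 : minpoly ℚ ((algebraMap ℝ ℂ) (s ^ m)) = minpoly ℚ (s ^ m) :=
      minpoly.algebraMap_eq (algebraMap ℝ ℂ).injective _
    have h3 : algebraMap K ℂ (g ^ m) = algebraMap ℝ ℂ (s ^ m) := by
      push_cast [map_pow]; rfl
    rw [← h1, h3, h2]
  have hz' : Polynomial.aeval z (minpoly ℚ (g ^ m)) = 0 := by rw [hmx]; exact hz
  obtain ⟨φ, hφ⟩ := IntermediateField.exists_algHom_of_splits_of_aeval hK' hz'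
  refine ⟨φ g, ?_, ?_, by rw [← map_pow, hφ]⟩
  · rw [← hmg, Polynomial.aeval_algHom_apply, minpoly.aeval, map_zero]
  · have hw : Polynomial.aeval (φ g) (minpoly ℚ s) = 0 := by
      rw [← hmg, Polynomial.aeval_algHom_apply, minpoly.aeval, map_zero]
    rcases hroots _ hw with h | h | h
    · exfalso; apply him
      rw [← hφ, map_pow, h, ← Complex.ofReal_pow]
      exact Complex.ofReal_im _
    · exfalso; apply him
      rw [← hφ, map_pow, h, ← Complex.ofReal_pow]
      exact Complex.ofReal_im _
    · exact h

/-- For any Salem number `s` and any open arc of the unit circle containing `1`,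
there are infinitely many positive integers `m` such that every non-real Galois
conjugate of `s ^ m` lies in that arc. -/
theorem salem_pow_conjugates_in_arc {s : ℝ} (hs : IsSalem s)
    (A : Set ℂ) (hA : IsOpen ((↑) ⁻¹' A : Set Circle)) (h1 : (1 : ℂ) ∈ A) :
    {m : ℕ | 0 < m ∧ ∀ z : ℂ, Polynomial.aeval z (minpoly ℚ (s ^ m)) = 0 →
      z.im ≠ 0 → z ∈ A}.Infinite := by
  classical
  have hsQ : IsIntegral ℚ s := hs.2.1.tower_top
  -- extract a metric neighborhood of 1
  obtain ⟨O, hOopen, hOeq⟩ := isOpen_induced_iff.mp hA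
  have h1O : (1 : ℂ) ∈ O := by
    have h1c : ((1 : Circle)) ∈ (Subtype.val ⁻¹' O : Set Circle) := by
      rw [hOeq]; exact h1
    exact h1c
  obtain ⟨ε, hε, hball⟩ := Metric.isOpen_iff.mp hOopen 1 h1O
  have hmemA : ∀ z : ℂ, ‖z‖ = 1 → ‖z - 1‖ < ε → z ∈ A := by
    intro z habs hlt
    have hzO : z ∈ O := hball (by rwa [Metric.mem_ball, Complex.dist_eq])
    have hzc : z ∈ Submonoid.unitSphere ℂ := by
      show z ∈ Metric.sphere (0:ℂ) 1
      rw [Metric.mem_sphere, Complex.dist_eq, sub_zero]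
      exact habs
    have : (⟨z, hzc⟩ : Circle) ∈ (Subtype.val ⁻¹' O : Set Circle) := hzO
    rw [hOeq] at this
    exact this
  -- the roots of the minimal polynomial on the unit circle
  set T : Finset ℂ :=
    ((minpoly ℚ s).aroots ℂ).toFinset.filter (fun w => ‖w‖ = 1) with hT
  have hT1 : ∀ i : ↥T, ‖(i : ℂ)‖ = 1 := fun i => (Finset.mem_filter.mp i.2).2
  -- recurrence for the tuple of circle roots
  set f : ℕ → (↥T → ℂ) := fun n i => (i : ℂ) ^ n with hf
  have hfK : ∀ n, f n ∈ Set.univ.pi (fun _ : ↥T => Metric.sphere (0 : ℂ) 1) := by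
    intro n
    rw [Set.mem_univ_pi]
    intro i
    simp [hf, Metric.mem_sphere, Complex.dist_eq, map_pow, hT1 i]
  have hcpt : IsCompact (Set.univ.pi (fun _ : ↥T => Metric.sphere (0 : ℂ) 1)) :=
    isCompact_univ_pi (fun _ => isCompact_sphere 0 1)
  obtain ⟨L, -, φ, hφmono, hφlim⟩ := hcpt.tendsto_subseq hfK
  apply Set.infinite_of_forall_exists_gt
  intro N
  obtain ⟨J, hJ⟩ := (Metric.tendsto_atTop.mp hφlim) (ε / 2) (half_pos hε)
  set j₂ : ℕ := J + φ J + N + 1 with hj₂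
  set m : ℕ := φ j₂ - φ J with hm
  have hφle : j₂ ≤ φ j₂ := hφmono.le_apply
  have hmN : N < m := by
    have : φ J + N < φ j₂ := by omega
    omega
  have hsum : φ J + m = φ j₂ := by
    have : φ J < φ j₂ := hφmono (by omega)
    omega
  have hdist : dist (f (φ j₂)) (f (φ J)) < ε := by
    have d1 : dist (f (φ j₂)) L < ε / 2 := hJ j₂ (by omega)
    have d2 : dist (f (φ J)) L < ε / 2 := hJ J le_rfl
    calc dist (f (φ j₂)) (f (φ J)) ≤ dist (f (φ j₂)) L + dist (f (φ J)) L :=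
          dist_triangle_right _ _ _
      _ < ε / 2 + ε / 2 := add_lt_add d1 d2
      _ = ε := add_halves ε
  have hcoord : ∀ i : ↥T, ‖(i : ℂ) ^ m - 1‖ < ε := by
    intro i
    have h1 : dist (f (φ j₂) i) (f (φ J) i) < ε :=
      lt_of_le_of_lt (dist_le_pi_dist _ _ i) hdist
    have h2 : (i : ℂ) ^ (φ j₂) - (i : ℂ) ^ (φ J) = (i : ℂ) ^ (φ J) * ((i : ℂ) ^ m - 1) := by
      rw [mul_sub, mul_one, ← pow_add, hsum]
    have h3 : ‖(i : ℂ) ^ (φ j₂) - (i : ℂ) ^ (φ J)‖ < ε := by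
      rwa [hf, Complex.dist_eq] at h1
    rwa [h2, norm_mul, norm_pow, hT1 i, one_pow, one_mul] at h3
  refine ⟨m, ⟨by omega, ?_⟩, hmN⟩
  intro z hz him
  obtain ⟨w, hw, habs, hpow⟩ := salem_key hs hz him
  have hwT : w ∈ T := by
    rw [hT, Finset.mem_filter, Multiset.mem_toFinset, Polynomial.mem_aroots]
    exact ⟨⟨minpoly.ne_zero hsQ, hw⟩, habs⟩
  have := hcoord ⟨w, hwT⟩
  rw [← hpow]
  exact hmemA _ (by rw [norm_pow, habs, one_pow]) this
end

section
/- For a unit complex number t = e^{iθ} with 0 < |θ| < 2π/(n+1), Squier's tridiagonal matrix J_{n,t} (with t = x^2, x = e^{iθ/2}) is positive definite; its determinant vanishes only when t is a nontrivial (n+1)-th root of unity. -/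
/-- Squier's real tridiagonal form: the `n × n` real symmetric matrix with diagonal
entries `2 cos(θ/2)` and off-diagonal entries `-1`, where `t = e^{iθ}`. -/
noncomputable def squierFormReal (n : ℕ) (θ : ℝ) : Matrix (Fin n) (Fin n) ℝ :=
  fun i j =>
    if (i : ℕ) = (j : ℕ) then 2 * Real.cos (θ / 2)
    else if (i : ℕ) + 1 = (j : ℕ) ∨ (j : ℕ) + 1 = (i : ℕ) then -1
    else 0

open Matrix

/-- extend a vector on `Fin n` by zero -/
def extv {n : ℕ} (x : Fin n → ℝ) (k : ℕ) : ℝ := if h : k < n then x ⟨k, h⟩ else 0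

/-- superdiagonal matrix -/
def supd (n : ℕ) : Matrix (Fin n) (Fin n) ℝ :=
  fun i j => if (i : ℕ) + 1 = (j : ℕ) then 1 else 0

lemma squier_decomp (n : ℕ) (θ : ℝ) :
    squierFormReal n θ = (2 * Real.cos (θ/2)) • (1 : Matrix (Fin n) (Fin n) ℝ)
      - supd n - (supd n)ᵀ := by
  ext i j
  simp only [squierFormReal, supd, Matrix.sub_apply, Matrix.smul_apply, Matrix.one_apply,
    Matrix.transpose_apply, smul_eq_mul]
  rcases eq_or_ne (i : ℕ) (j : ℕ) with h | h
  · have : i = j := Fin.ext h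
    subst this
    simp [h]
  · have : i ≠ j := fun hh => h (by rw [hh])
    simp only [if_neg h]
    by_cases h1 : (i : ℕ) + 1 = (j : ℕ)
    · have hj : ¬ (j:ℕ) + 1 = (i:ℕ) := by omega
      simp [h1, this, hj]
    · by_cases h2 : (j : ℕ) + 1 = (i : ℕ)
      · simp [h1, h2, this]
      · simp [h1, h2, this]

lemma supd_mulVec {n : ℕ} (x : Fin n → ℝ) (i : Fin n) :
    (supd n *ᵥ x) i = extv x ((i : ℕ) + 1) := by
  simp only [Matrix.mulVec, dotProduct, supd]
  by_cases h : (i : ℕ) + 1 < n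
  · rw [extv, dif_pos h]
    rw [Finset.sum_eq_single (⟨(i : ℕ) + 1, h⟩ : Fin n)]
    · simp
    · intro b _ hb
      rw [if_neg, zero_mul]
      intro hc; exact hb (Fin.ext hc.symm)
    · simp
  · rw [extv, dif_neg h]
    apply Finset.sum_eq_zero
    intro b _
    rw [if_neg, zero_mul]
    intro hc
    exact h (hc ▸ b.isLt)

lemma quad_expand (n : ℕ) (θ : ℝ) (x : Fin n → ℝ) :
    x ⬝ᵥ (squierFormReal n θ *ᵥ x) =
      ∑ i ∈ Finset.range n,
        (2 * Real.cos (θ/2) * extv x i ^ 2 - 2 * (extv x i * extv x (i+1))) := by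
  rw [squier_decomp]
  rw [Matrix.sub_mulVec, Matrix.sub_mulVec, dotProduct_sub, dotProduct_sub]
  rw [Matrix.smul_mulVec, Matrix.one_mulVec, dotProduct_smul]
  have hT : x ⬝ᵥ ((supd n)ᵀ *ᵥ x) = x ⬝ᵥ (supd n *ᵥ x) := by
    rw [Matrix.mulVec_transpose, dotProduct_comm, ← Matrix.dotProduct_mulVec]
  rw [hT]
  have h1 : x ⬝ᵥ x = ∑ i ∈ Finset.range n, extv x i ^ 2 := by
    rw [dotProduct, ← Fin.sum_univ_eq_sum_range]
    refine Finset.sum_congr rfl fun i _ => ?_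
    simp [extv, sq]
  have h2 : x ⬝ᵥ (supd n *ᵥ x) = ∑ i ∈ Finset.range n, extv x i * extv x (i+1) := by
    rw [dotProduct, ← Fin.sum_univ_eq_sum_range]
    refine Finset.sum_congr rfl fun i _ => ?_
    rw [supd_mulVec]
    simp [extv]
  rw [h1, h2, smul_eq_mul, Finset.mul_sum, ← Finset.sum_sub_distrib, ← Finset.sum_sub_distrib]
  exact Finset.sum_congr rfl fun i _ => by ring

lemma squier_isHermitian (n : ℕ) (θ : ℝ) : (squierFormReal n θ).IsHermitian := by
  unfold Matrix.IsHermitian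
  ext i j
  simp only [Matrix.conjTranspose_apply, squierFormReal, star_trivial]
  by_cases h1 : (j:ℕ) = (i:ℕ)
  · simp [h1]
  · have h1' : ¬ (i:ℕ) = (j:ℕ) := fun hh => h1 hh.symm
    simp only [if_neg h1, if_neg h1']
    exact if_congr or_comm rfl rfl

lemma squier_posDef_aux (n : ℕ) (φ : ℝ) (hp0 : 0 < φ) (hp1 : (n+1) * φ < Real.pi) :
    (squierFormReal n (2*φ)).PosDef := by
  refine Matrix.PosDef.of_dotProduct_mulVec_pos (squier_isHermitian _ _) ?_
  intro x hx
  have hstar : star x = x := by funext i; simp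
  rw [hstar]
  set s : ℕ → ℝ := fun k => Real.sin (k * φ) with hs
  have hspos : ∀ k : ℕ, 1 ≤ k → k ≤ n+1 → 0 < s k := by
    intro k hk1 hk2
    apply Real.sin_pos_of_pos_of_lt_pi
    · have hk : (1:ℝ) ≤ (k:ℝ) := by exact_mod_cast hk1
      nlinarith
    · have hk : (k:ℝ) ≤ (n:ℝ)+1 := by exact_mod_cast hk2
      nlinarith
  have hrec : ∀ k : ℕ, s k + s (k+2) = 2 * Real.cos φ * s (k+1) := by
    intro k
    have e1 : ((k:ℝ)+2) * φ = ((k:ℝ)+1)*φ + φ := by ring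
    have e2 : (k:ℝ) * φ = ((k:ℝ)+1)*φ - φ := by ring
    simp only [hs]
    push_cast
    rw [e1, e2, Real.sin_add, Real.sin_sub]
    ring
  set a : ℕ → ℝ := extv x with ha
  have key : ∀ i ∈ Finset.range n,
      (2 * Real.cos φ * a i ^ 2 - 2 * (a i * a (i+1)))
        - ((s i / s (i+1)) * a i ^ 2 - (s (i+1) / s (i+2)) * a (i+1) ^ 2)
      = (1 / (s (i+1) * s (i+2))) * (s (i+2) * a i - s (i+1) * a (i+1)) ^ 2 := by
    intro i hi
    have hin : i < n := Finset.mem_range.mp hi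
    have hq : 0 < s (i+1) := hspos _ (by omega) (by omega)
    have hr : 0 < s (i+2) := hspos _ (by omega) (by omega)
    have hp : s i = 2 * Real.cos φ * s (i+1) - s (i+2) := by linarith [hrec i]
    rw [hp]
    field_simp
    ring
  have tel : ∑ i ∈ Finset.range n,
      ((s i / s (i+1)) * a i ^ 2 - (s (i+1) / s (i+2)) * a (i+1) ^ 2) = 0 := by
    rw [Finset.sum_range_sub' (f := fun k => (s k / s (k+1)) * a k ^ 2) n]
    have h00 : s 0 = 0 := by simp [hs]
    have hnn : a n = 0 := by simp [ha, extv]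
    simp [h00, hnn]
  have main : x ⬝ᵥ (squierFormReal n (2*φ) *ᵥ x)
      = ∑ i ∈ Finset.range n,
          (1 / (s (i+1) * s (i+2))) * (s (i+2) * a i - s (i+1) * a (i+1)) ^ 2 := by
    rw [quad_expand, show (2*φ)/2 = φ by ring, ← ha]
    have hsplit : ∑ i ∈ Finset.range n, ((2 * Real.cos φ * a i ^ 2 - 2 * (a i * a (i+1)))
            - ((s i / s (i+1)) * a i ^ 2 - (s (i+1) / s (i+2)) * a (i+1) ^ 2))
        = (∑ i ∈ Finset.range n, (2 * Real.cos φ * a i ^ 2 - 2 * (a i * a (i+1))))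
          - ∑ i ∈ Finset.range n,
              ((s i / s (i+1)) * a i ^ 2 - (s (i+1) / s (i+2)) * a (i+1) ^ 2) :=
      Finset.sum_sub_distrib _ _
    rw [← Finset.sum_congr rfl key, hsplit, tel, sub_zero]
  rw [main]
  obtain ⟨i0, hi0⟩ := Function.ne_iff.mp hx
  set T := (Finset.range n).filter (fun k => a k ≠ 0) with hT
  have hTne : T.Nonempty := by
    refine ⟨(i0 : ℕ), Finset.mem_filter.mpr ⟨Finset.mem_range.mpr i0.isLt, ?_⟩⟩
    simpa [ha, extv, i0.isLt] using hi0
  set j := T.max' hTne with hj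
  have hjT : j ∈ T := T.max'_mem hTne
  have hjn : j < n := Finset.mem_range.mp (Finset.mem_filter.mp hjT).1
  have hja : a j ≠ 0 := (Finset.mem_filter.mp hjT).2
  have hnext : a (j+1) = 0 := by
    by_cases h : j + 1 < n
    · by_contra hne
      have hmem : j+1 ∈ T := Finset.mem_filter.mpr ⟨Finset.mem_range.mpr h, hne⟩
      have := Finset.le_max' T _ hmem
      omega
    · simp [ha, extv, h]
  apply Finset.sum_pos'
  · intro i hi
    have hin : i < n := Finset.mem_range.mp hi
    have hq : 0 < s (i+1) := hspos _ (by omega) (by omega)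
    have hr : 0 < s (i+2) := hspos _ (by omega) (by omega)
    have : 0 < s (i+1) * s (i+2) := mul_pos hq hr
    positivity
  · refine ⟨j, Finset.mem_range.mpr hjn, ?_⟩
    have hq : 0 < s (j+1) := hspos _ (by omega) (by omega)
    have hr : 0 < s (j+2) := hspos _ (by omega) (by omega)
    rw [hnext]
    have hne : s (j+2) * a j - s (j+1) * 0 ≠ 0 := by
      simpa using mul_ne_zero (ne_of_gt hr) hja
    have h2 : 0 < (s (j+2) * a j - s (j+1) * 0) ^ 2 := pow_two_pos_of_ne_zero hne
    have h3 : 0 < 1 / (s (j+1) * s (j+2)) := by positivity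
    exact mul_pos h3 h2

lemma squier_submatrix (m : ℕ) (ψ : ℝ) :
    (squierFormReal (m+1) ψ).submatrix Fin.succ Fin.succ = squierFormReal m ψ := by
  ext i j
  simp only [Matrix.submatrix_apply, squierFormReal, Fin.val_succ]
  by_cases h : (i:ℕ) = j
  · simp [h]
  · have h' : ¬ (i:ℕ)+1 = (j:ℕ)+1 := by omega
    rw [if_neg h, if_neg h']
    exact if_congr (by omega) rfl rfl

lemma squier_det_rec (n : ℕ) (ψ : ℝ) :
    (squierFormReal (n+2) ψ).det =
      2 * Real.cos (ψ/2) * (squierFormReal (n+1) ψ).det - (squierFormReal n ψ).det := by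
  rw [Matrix.det_succ_row_zero, Fin.sum_univ_succ, Fin.sum_univ_succ]
  have hzero : ∀ j : Fin n, squierFormReal (n+2) ψ 0 j.succ.succ = 0 := by
    intro j
    simp only [squierFormReal, Fin.val_succ, Fin.val_zero]
    split_ifs <;> simp_all <;> omega
  simp only [hzero, mul_zero, zero_mul, Finset.sum_const_zero, add_zero]
  have h00 : squierFormReal (n+2) ψ 0 0 = 2 * Real.cos (ψ/2) := by
    simp [squierFormReal]
  have h01 : squierFormReal (n+2) ψ 0 (Fin.succ 0) = -1 := by
    simp only [squierFormReal, Fin.val_succ, Fin.val_zero]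
    rw [if_neg (by omega), if_pos (by simp)]
  have hsub0 : (squierFormReal (n+2) ψ).submatrix Fin.succ (Fin.succAbove 0)
      = squierFormReal (n+1) ψ := by
    rw [Fin.succAbove_zero, squier_submatrix]
  -- second minor
  have hsub1 : ((squierFormReal (n+2) ψ).submatrix Fin.succ (Fin.succ 0).succAbove).det
      = - (squierFormReal n ψ).det := by
    rw [Matrix.det_succ_column_zero, Fin.sum_univ_succ]
    have hz : ∀ i : Fin n,
        (squierFormReal (n+2) ψ).submatrix Fin.succ (Fin.succ 0).succAbove i.succ 0 = 0 := by
      intro i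
      simp only [Matrix.submatrix_apply, Fin.succ_succAbove_zero]
      simp only [squierFormReal, Fin.val_succ, Fin.val_zero]
      split_ifs <;> simp_all <;> omega
    simp only [hz, mul_zero, zero_mul, Finset.sum_const_zero, add_zero]
    have he : (squierFormReal (n+2) ψ).submatrix Fin.succ (Fin.succ 0).succAbove 0 0 = -1 := by
      simp only [Matrix.submatrix_apply, Fin.succ_succAbove_zero]
      simp only [squierFormReal, Fin.val_succ, Fin.val_zero]
      rw [if_neg (by omega), if_pos (by simp)]
    have hm : ((squierFormReal (n+2) ψ).submatrix Fin.succ (Fin.succ 0).succAbove).submatrix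
        (Fin.succAbove 0) Fin.succ = squierFormReal n ψ := by
      rw [Fin.succAbove_zero]
      ext i j
      simp only [Matrix.submatrix_apply, Fin.succ_succAbove_succ]
      have : ((squierFormReal (n+2) ψ).submatrix Fin.succ Fin.succ).submatrix Fin.succ Fin.succ
          = squierFormReal n ψ := by rw [squier_submatrix, squier_submatrix]
      calc squierFormReal (n+2) ψ i.succ.succ ((0:Fin (n+1)).succAbove j).succ
          = squierFormReal (n+2) ψ i.succ.succ j.succ.succ := by rw [Fin.succAbove_zero]
        _ = squierFormReal n ψ i j := by
            rw [← this]; simp [Matrix.submatrix_apply]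
    rw [he, hm]
    simp
  rw [h00, h01, hsub0, hsub1]
  simp
  ring

lemma squier_det_sin (ψ : ℝ) (n : ℕ) :
    Real.sin (ψ/2) * (squierFormReal n ψ).det = Real.sin (((n:ℝ)+1) * (ψ/2)) := by
  have key : ∀ m : ℕ,
      (Real.sin (ψ/2) * (squierFormReal m ψ).det = Real.sin (((m:ℝ)+1) * (ψ/2))) ∧
      (Real.sin (ψ/2) * (squierFormReal (m+1) ψ).det = Real.sin (((m:ℝ)+2) * (ψ/2))) := by
    intro m
    induction m with
    | zero =>
      constructor
      · rw [Matrix.det_fin_zero]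
        norm_num
      · rw [Matrix.det_fin_one]
        have : squierFormReal 1 ψ 0 0 = 2 * Real.cos (ψ/2) := by simp [squierFormReal]
        rw [this]
        have h2 : ((0:ℕ):ℝ) + 2 = 2 := by norm_num
        rw [h2, show (2:ℝ) * (ψ/2) = 2 * (ψ/2) from rfl, Real.sin_two_mul]
        ring
    | succ k ih =>
      have ecast : ((k+1:ℕ):ℝ) + 1 = (k:ℝ) + 2 := by push_cast; ring
      refine ⟨by rw [ecast]; exact ih.2, ?_⟩
      rw [squier_det_rec]
      have e3 : (((k:ℕ)+1:ℕ):ℝ) + 2 = (k:ℝ) + 3 := by push_cast; ring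
      rw [e3]
      have e1 : ((k:ℝ)+3) * (ψ/2) = ((k:ℝ)+2)*(ψ/2) + (ψ/2) := by ring
      have e2 : ((k:ℝ)+1) * (ψ/2) = ((k:ℝ)+2)*(ψ/2) - (ψ/2) := by ring
      have c1 := ih.1
      have c2 := ih.2
      rw [e2] at c1
      have lhs : Real.sin (ψ/2) * (2 * Real.cos (ψ/2) * (squierFormReal (k+1) ψ).det
          - (squierFormReal k ψ).det)
          = 2 * Real.cos (ψ/2) * (Real.sin (ψ/2) * (squierFormReal (k+1) ψ).det)
            - Real.sin (ψ/2) * (squierFormReal k ψ).det := by ring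
      rw [lhs, c1, c2, e1, Real.sin_add, Real.sin_sub]
      ring
  exact (key n).1

lemma squier_det_of_sin_zero (ψ : ℝ) (h : Real.sin (ψ/2) = 0) (n : ℕ) :
    (squierFormReal n ψ).det = ((n:ℝ)+1) * (Real.cos (ψ/2))^n := by
  have hc2 : (Real.cos (ψ/2))^2 = 1 := by
    have := Real.sin_sq_add_cos_sq (ψ/2)
    rw [h] at this
    nlinarith
  have key : ∀ m : ℕ,
      ((squierFormReal m ψ).det = ((m:ℝ)+1) * (Real.cos (ψ/2))^m) ∧
      ((squierFormReal (m+1) ψ).det = ((m:ℝ)+2) * (Real.cos (ψ/2))^(m+1)) := by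
    intro m
    induction m with
    | zero =>
      constructor
      · rw [Matrix.det_fin_zero]; norm_num
      · rw [Matrix.det_fin_one]
        have : squierFormReal 1 ψ 0 0 = 2 * Real.cos (ψ/2) := by simp [squierFormReal]
        rw [this]
        push_cast
        ring
    | succ k ih =>
      have ecast : ((k+1:ℕ):ℝ) + 1 = (k:ℝ) + 2 := by push_cast; ring
      refine ⟨by rw [ecast]; exact ih.2, ?_⟩
      rw [squier_det_rec, ih.1, ih.2]
      have hpow : (Real.cos (ψ/2))^(k+2) = (Real.cos (ψ/2))^k := by
        rw [pow_add, hc2, mul_one]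
      push_cast
      rw [hpow]
      have hpow1 : (Real.cos (ψ/2))^(k+1) = (Real.cos (ψ/2))^k * Real.cos (ψ/2) := by
        rw [pow_succ]
      rw [hpow1]
      linear_combination (2*((k:ℝ)+2)*Real.cos (ψ/2)^k) * hc2
  exact (key n).1

/-- For `t = e^{iθ}` with `0 < |θ| < 2π/(n+1)`, Squier's form is positive definite;
moreover its determinant vanishes only when `t` is a nontrivial `(n+1)`-st root of
unity. -/
theorem squierFormReal_posDef (n : ℕ) (θ : ℝ)
    (h0 : 0 < |θ|) (h1 : |θ| < 2 * Real.pi / (n + 1)) :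
    (squierFormReal n θ).PosDef ∧
    ∀ ψ : ℝ, (squierFormReal n ψ).det = 0 →
      Complex.exp (ψ * Complex.I) ^ (n + 1) = 1 ∧ Complex.exp (ψ * Complex.I) ≠ 1 := by
  constructor
  · have hn1 : (0:ℝ) < (n:ℝ)+1 := by positivity
    have hφ0 : 0 < |θ|/2 := by linarith
    rw [lt_div_iff₀ hn1] at h1
    have hφ1 : ((n:ℝ)+1) * (|θ|/2) < Real.pi := by nlinarith [h1]
    have heq : squierFormReal n (2*(|θ|/2)) = squierFormReal n θ := by
      have hco : Real.cos ((2*(|θ|/2))/2) = Real.cos (θ/2) := by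
        rw [show (2*(|θ|/2))/2 = |θ|/2 by ring,
          show |θ|/2 = |θ/2| by rw [abs_div]; norm_num]
        exact Real.cos_abs _
      unfold squierFormReal
      rw [hco]
    rw [← heq]
    exact squier_posDef_aux n (|θ|/2) hφ0 hφ1
  · intro ψ hdet
    have hsinne : Real.sin (ψ/2) ≠ 0 := by
      intro hz
      have hdz := squier_det_of_sin_zero ψ hz n
      rw [hdet] at hdz
      have hc2 : (Real.cos (ψ/2))^2 = 1 := by
        have := Real.sin_sq_add_cos_sq (ψ/2)
        rw [hz] at this
        nlinarith
      have hn : ((n:ℝ)+1) ≠ 0 := by positivity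
      have hcn : Real.cos (ψ/2) ^ n = 0 := by
        rcases mul_eq_zero.mp hdz.symm with h | h
        · exact absurd h hn
        · exact h
      have hone : (Real.cos (ψ/2) ^ n)^2 = 1 := by
        rw [← pow_mul, mul_comm, pow_mul, hc2, one_pow]
      rw [hcn] at hone
      norm_num at hone
    have hsin2 : Real.sin (((n:ℝ)+1) * (ψ/2)) = 0 := by
      have hds := squier_det_sin ψ n
      rw [hdet, mul_zero] at hds
      exact hds.symm
    obtain ⟨k, hk⟩ := Real.sin_eq_zero_iff.mp hsin2
    constructor
    · rw [← Complex.exp_nat_mul, Complex.exp_eq_one_iff]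
      refine ⟨k, ?_⟩
      have hr : ((n:ℝ)+1) * ψ = (k:ℝ) * (2*Real.pi) := by linear_combination (-2)*hk
      have hrc := congrArg (fun r : ℝ => (r:ℂ)) hr
      push_cast at hrc
      push_cast
      linear_combination hrc * Complex.I
    · intro hone
      obtain ⟨m, hm⟩ := Complex.exp_eq_one_iff.mp hone
      have hmI : (ψ:ℂ) * Complex.I = (((m:ℝ)*(2*Real.pi) : ℝ) : ℂ) * Complex.I := by
        push_cast
        linear_combination hm
      have hψ : (ψ:ℂ) = (((m:ℝ)*(2*Real.pi) : ℝ) : ℂ) :=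
        mul_right_cancel₀ Complex.I_ne_zero hmI
      have hψr : ψ = (m:ℝ) * (2*Real.pi) := by exact_mod_cast hψ
      apply hsinne
      rw [hψr, show ((m:ℝ)*(2*Real.pi))/2 = (m:ℝ)*Real.pi by ring]
      exact Real.sin_int_mul_pi m
end
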